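/- Let (X_x)_{x∈ℝ} be identically distributed nonnegative random variables with P(X_0 > ε) = δ > 0 for some ε > 0, and f : ℝ → [0,∞) measurable. If there exists an event A with P(A) > 1 − δ/2 on which ∫_ℝ f(x) X_x dx ≤ N for some constant N, then ∫_ℝ f(x) dx ≤ 2N/(εδ). -/

import Mathlib

open MeasureTheory ProbabilityTheory ENNReal

/-- Quantitative core of Jeulin's lemma: if `P(X x > ε) = δ` for all `x`, and on an
event `A` with `P(A) > 1 - δ/2` we have `∫ f x * X x dx ≤ N`, then
`∫ f ≤ 2N/(εδ)`. -/
theorem jeulin_quantitative {Ω : Type*} [MeasurableSpace Ω] (P : Measure Ω)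
    [IsProbabilityMeasure P]
    (X : ℝ → Ω → ℝ) (hXmeas : Measurable (Function.uncurry X))
    (hXnonneg : ∀ x ω, 0 ≤ X x ω)
    (hXid : ∀ x : ℝ, P.map (X x) = P.map (X 0))
    (ε δ : ℝ) (hε : 0 < ε) (hδ : 0 < δ)
    (hXε : P {ω | ε < X 0 ω} = ENNReal.ofReal δ)
    (f : ℝ → ℝ) (hf : Measurable f) (hf0 : ∀ x, 0 ≤ f x)
    (A : Set Ω) (hA : MeasurableSet A) (hPA : ENNReal.ofReal (1 - δ / 2) < P A)
    (N : ℝ) (hN : 0 ≤ N)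
    (hbound : ∀ ω ∈ A, ∫⁻ x : ℝ, ENNReal.ofReal (f x * X x ω) ≤ ENNReal.ofReal N) :
    ∫⁻ x : ℝ, ENNReal.ofReal (f x) ≤ ENNReal.ofReal (2 * N / (ε * δ)) := by
  have hXx : ∀ x : ℝ, Measurable (X x) := fun x =>
    hXmeas.comp (measurable_const.prodMk measurable_id)
  -- δ ≤ 1
  have hδ1 : δ ≤ 1 := by
    have := hXε ▸ prob_le_one (μ := P) (s := {ω | ε < X 0 ω})
    exact (ENNReal.ofReal_le_one).mp this
  -- each X x has P(X x > ε) = δ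
  have hS : ∀ x : ℝ, P {ω | ε < X x ω} = ENNReal.ofReal δ := by
    intro x
    have h1 : P {ω | ε < X x ω} = (P.map (X x)) (Set.Ioi ε) :=
      (Measure.map_apply (hXx x) measurableSet_Ioi).symm
    have h2 : P {ω | ε < X 0 ω} = (P.map (X 0)) (Set.Ioi ε) :=
      (Measure.map_apply (hXx 0) measurableSet_Ioi).symm
    rw [h1, hXid x, ← h2, hXε]
  -- P Aᶜ ≤ δ/2
  have hAc : P Aᶜ ≤ ENNReal.ofReal (δ / 2) := by
    have h1 : P Aᶜ = 1 - P A := prob_compl_eq_one_sub hA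
    have h2 : P Aᶜ ≤ 1 - ENNReal.ofReal (1 - δ / 2) := by
      rw [h1]; exact tsub_le_tsub_left hPA.le 1
    calc P Aᶜ ≤ 1 - ENNReal.ofReal (1 - δ / 2) := h2
      _ = ENNReal.ofReal 1 - ENNReal.ofReal (1 - δ / 2) := by rw [ENNReal.ofReal_one]
      _ = ENNReal.ofReal (1 - (1 - δ / 2)) := (ENNReal.ofReal_sub _ (by linarith)).symm
      _ = ENNReal.ofReal (δ / 2) := by ring_nf
  -- P (S ∩ A) ≥ δ/2
  have hSA : ∀ x : ℝ, ENNReal.ofReal (δ / 2) ≤ P ({ω | ε < X x ω} ∩ A) := by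
    intro x
    have hsplit : P {ω | ε < X x ω} ≤ P ({ω | ε < X x ω} ∩ A) + P Aᶜ := by
      calc P {ω | ε < X x ω}
          ≤ P (({ω | ε < X x ω} ∩ A) ∪ Aᶜ) := by
            apply measure_mono; intro ω hω
            by_cases h : ω ∈ A
            · exact Or.inl ⟨hω, h⟩
            · exact Or.inr h
        _ ≤ P ({ω | ε < X x ω} ∩ A) + P Aᶜ := measure_union_le _ _
    have key : ENNReal.ofReal (δ / 2) + ENNReal.ofReal (δ / 2)
        ≤ P ({ω | ε < X x ω} ∩ A) + ENNReal.ofReal (δ / 2) := by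
      calc ENNReal.ofReal (δ / 2) + ENNReal.ofReal (δ / 2)
          = ENNReal.ofReal δ := by
            rw [← ENNReal.ofReal_add (by linarith) (by linarith)]; ring_nf
        _ = P {ω | ε < X x ω} := (hS x).symm
        _ ≤ P ({ω | ε < X x ω} ∩ A) + P Aᶜ := hsplit
        _ ≤ P ({ω | ε < X x ω} ∩ A) + ENNReal.ofReal (δ / 2) := by
            exact add_le_add_right hAc _
    exact (ENNReal.add_le_add_iff_right ENNReal.ofReal_ne_top).mp key
  -- lower bound on ∫⁻ ω in A, X x ω dP
  have hlow : ∀ x : ℝ, ENNReal.ofReal (ε * (δ / 2)) ≤ ∫⁻ ω in A, ENNReal.ofReal (X x ω) ∂P := by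
    intro x
    have hmS : MeasurableSet ({ω | ε < X x ω} ∩ A) :=
      (measurableSet_lt measurable_const (hXx x)).inter hA
    calc ENNReal.ofReal (ε * (δ / 2))
        = ENNReal.ofReal ε * ENNReal.ofReal (δ / 2) :=
          ENNReal.ofReal_mul hε.le
      _ ≤ ENNReal.ofReal ε * P ({ω | ε < X x ω} ∩ A) := by
          exact mul_le_mul_right (hSA x) _
      _ = ∫⁻ _ in {ω | ε < X x ω} ∩ A, ENNReal.ofReal ε ∂P := by
          rw [setLIntegral_const]
      _ ≤ ∫⁻ ω in {ω | ε < X x ω} ∩ A, ENNReal.ofReal (X x ω) ∂P := by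
          apply setLIntegral_mono ((hXx x).ennreal_ofReal)
          intro ω hω
          exact ENNReal.ofReal_le_ofReal hω.1.le
      _ ≤ ∫⁻ ω in A, ENNReal.ofReal (X x ω) ∂P := by
          exact lintegral_mono_set Set.inter_subset_right
  -- Tonelli
  have hjoint : Measurable (fun p : Ω × ℝ => ENNReal.ofReal (f p.2 * X p.2 p.1)) := by
    apply Measurable.ennreal_ofReal
    exact (hf.comp measurable_snd).mul (hXmeas.comp measurable_swap)
  have hswap : ∫⁻ ω in A, ∫⁻ x : ℝ, ENNReal.ofReal (f x * X x ω) ∂(volume) ∂P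
      = ∫⁻ x : ℝ, ∫⁻ ω in A, ENNReal.ofReal (f x * X x ω) ∂P ∂(volume) :=
    lintegral_lintegral_swap hjoint.aemeasurable
  have hI_le : ∫⁻ ω in A, ∫⁻ x : ℝ, ENNReal.ofReal (f x * X x ω) ∂(volume) ∂P
      ≤ ENNReal.ofReal N := by
    calc ∫⁻ ω in A, ∫⁻ x : ℝ, ENNReal.ofReal (f x * X x ω) ∂(volume) ∂P
        ≤ ∫⁻ _ in A, ENNReal.ofReal N ∂P := by
          apply setLIntegral_mono
          · exact measurable_const
          · exact hbound
      _ = ENNReal.ofReal N * P A := by rw [setLIntegral_const]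
      _ ≤ ENNReal.ofReal N * 1 := mul_le_mul_right prob_le_one _
      _ = ENNReal.ofReal N := mul_one _
  -- inner integral factorization and lower bound
  have hinner : ∀ x : ℝ, ENNReal.ofReal (ε * (δ / 2)) * ENNReal.ofReal (f x)
      ≤ ∫⁻ ω in A, ENNReal.ofReal (f x * X x ω) ∂P := by
    intro x
    have heq : ∫⁻ ω in A, ENNReal.ofReal (f x * X x ω) ∂P
        = ENNReal.ofReal (f x) * ∫⁻ ω in A, ENNReal.ofReal (X x ω) ∂P := by
      rw [← lintegral_const_mul _ ((hXx x).ennreal_ofReal)]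
      congr 1; funext ω
      exact ENNReal.ofReal_mul (hf0 x)
    rw [heq, mul_comm (ENNReal.ofReal (ε * (δ / 2)))]
    exact mul_le_mul_right (hlow x) _
  -- combine
  have hmain : ENNReal.ofReal (ε * (δ / 2)) * ∫⁻ x : ℝ, ENNReal.ofReal (f x)
      ≤ ENNReal.ofReal N := by
    calc ENNReal.ofReal (ε * (δ / 2)) * ∫⁻ x : ℝ, ENNReal.ofReal (f x)
        = ∫⁻ x : ℝ, ENNReal.ofReal (ε * (δ / 2)) * ENNReal.ofReal (f x) := by
          rw [lintegral_const_mul _ hf.ennreal_ofReal]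
      _ ≤ ∫⁻ x : ℝ, ∫⁻ ω in A, ENNReal.ofReal (f x * X x ω) ∂P := lintegral_mono hinner
      _ = ∫⁻ ω in A, ∫⁻ x : ℝ, ENNReal.ofReal (f x * X x ω) ∂(volume) ∂P := hswap.symm
      _ ≤ ENNReal.ofReal N := hI_le
  have hc0 : 0 < ε * (δ / 2) := by positivity
  have hdiv : ∫⁻ x : ℝ, ENNReal.ofReal (f x)
      ≤ ENNReal.ofReal N / ENNReal.ofReal (ε * (δ / 2)) := by
    rw [ENNReal.le_div_iff_mul_le (Or.inl (by simp [ENNReal.ofReal_eq_zero]; linarith))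
      (Or.inl ENNReal.ofReal_ne_top)]
    rw [mul_comm]; exact hmain
  calc ∫⁻ x : ℝ, ENNReal.ofReal (f x)
      ≤ ENNReal.ofReal N / ENNReal.ofReal (ε * (δ / 2)) := hdiv
    _ = ENNReal.ofReal (N / (ε * (δ / 2))) := (ENNReal.ofReal_div_of_pos hc0).symm
    _ = ENNReal.ofReal (2 * N / (ε * δ)) := by
        congr 1; field_simp
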